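/- For ρ ∈ [0,1] and Ṙ > 0, define E₀(ρ, Ṙ) = ρ/((ρ+1)N₀) − ρṘ/log e. Then the maximum of E₀(ρ, Ṙ) over ρ ∈ [0,1] equals 1/(2N₀) − Ṙ/log e if 0 < Ṙ ≤ (log e)/(4N₀), and equals (√(1/N₀) − √(Ṙ/log e))² if (log e)/(4N₀) ≤ Ṙ ≤ (log e)/N₀, the latter maximum being attained at ρ = √((log e)/(N₀Ṙ)) − 1. -/

import Mathlib

lemma key_ub (N0 R L ρ : ℝ) (hN0 : 0 < N0) (hL : 0 < L) (hR : 0 < R) (hρ : 0 ≤ ρ) :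
    ρ / ((ρ + 1) * N0) - ρ * R / L ≤ (Real.sqrt (1 / N0) - Real.sqrt (R / L)) ^ 2 := by
  set a := Real.sqrt (1 / N0) with ha
  set b := Real.sqrt (R / L) with hb
  have ha2 : a ^ 2 = 1 / N0 := Real.sq_sqrt (by positivity)
  have hb2 : b ^ 2 = R / L := Real.sq_sqrt (by positivity)
  have hN0' : N0 = 1 / a ^ 2 := by rw [ha2]; field_simp
  have hR' : R = b ^ 2 * L := by rw [hb2]; field_simp
  have ha0 : 0 < a := Real.sqrt_pos.2 (by positivity)
  have ht : (0:ℝ) < ρ + 1 := by linarith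
  have heq : ρ / ((ρ + 1) * N0) - ρ * R / L
      = a ^ 2 + b ^ 2 - (a ^ 2 / (ρ + 1) + (ρ + 1) * b ^ 2) := by
    rw [hN0', hR']; field_simp; ring
  have h2 : 2 * a * b ≤ a ^ 2 / (ρ + 1) + (ρ + 1) * b ^ 2 := by
    have h := sq_nonneg (a - (ρ + 1) * b)
    have h3 : (a - (ρ + 1) * b) ^ 2 / (ρ + 1)
        = a ^ 2 / (ρ + 1) + (ρ + 1) * b ^ 2 - 2 * a * b := by
      field_simp; ring
    have h4 : 0 ≤ (a - (ρ + 1) * b) ^ 2 / (ρ + 1) := by positivity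
    linarith
  rw [heq]; nlinarith [h2]


/-- Maximization of the error exponent `E₀(ρ, Ṙ) = ρ/((ρ+1)N₀) - ρṘ/log e`
over `ρ ∈ [0,1]`: for low rates the maximum is at `ρ = 1` with value
`1/(2N₀) - Ṙ/log e`; for high rates the maximum is
`(√(1/N₀) - √(Ṙ/log e))²`, attained at `ρ = √(log e/(N₀ Ṙ)) - 1`. -/
theorem error_exponent_max
    (N0 R L : ℝ) (hN0 : 0 < N0) (hL : L = Real.logb 2 (Real.exp 1)) :
    ((0 < R ∧ R ≤ L / (4 * N0)) →
      IsGreatest ((fun ρ => ρ / ((ρ + 1) * N0) - ρ * R / L) '' Set.Icc (0 : ℝ) 1)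
        (1 / (2 * N0) - R / L)) ∧
    ((L / (4 * N0) ≤ R ∧ R ≤ L / N0) →
      IsGreatest ((fun ρ => ρ / ((ρ + 1) * N0) - ρ * R / L) '' Set.Icc (0 : ℝ) 1)
          ((Real.sqrt (1 / N0) - Real.sqrt (R / L)) ^ 2) ∧
        (fun ρ => ρ / ((ρ + 1) * N0) - ρ * R / L) (Real.sqrt (L / (N0 * R)) - 1)
          = (Real.sqrt (1 / N0) - Real.sqrt (R / L)) ^ 2) := by
  have hL0 : 0 < L := by
    rw [hL, Real.logb, Real.log_exp]
    positivity
  constructor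
  · rintro ⟨hR0, hRle⟩
    constructor
    · refine ⟨1, Set.mem_Icc.2 ⟨zero_le_one, le_refl 1⟩, ?_⟩
      norm_num
    · rintro x ⟨ρ, hρ, rfl⟩
      obtain ⟨hρ0, hρ1⟩ := hρ
      have ht : (0:ℝ) < ρ + 1 := by linarith
      have hRL : R / L ≤ 1 / (4 * N0) := by
        rw [div_le_div_iff₀ hL0 (by positivity)]
        calc R * (4 * N0) ≤ (L / (4 * N0)) * (4 * N0) := by
              apply mul_le_mul_of_nonneg_right hRle (by positivity)
          _ = 1 * L := by field_simp
      have hfac : 0 ≤ 1 / (2 * (ρ + 1) * N0) - R / L := by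
        have h1 : 1 / (4 * N0) ≤ 1 / (2 * (ρ + 1) * N0) := by
          apply one_div_le_one_div_of_le (by positivity)
          nlinarith
        linarith
      have hkey : 1 / (2 * N0) - R / L - (ρ / ((ρ + 1) * N0) - ρ * R / L)
          = (1 - ρ) * (1 / (2 * (ρ + 1) * N0) - R / L) := by
        field_simp; ring
      have := mul_nonneg (by linarith : (0:ℝ) ≤ 1 - ρ) hfac
      dsimp only
      linarith [hkey ▸ this]
  · rintro ⟨hR1, hR2⟩
    have hR0 : 0 < R := lt_of_lt_of_le (by positivity) hR1
    set a := Real.sqrt (1 / N0) with ha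
    set b := Real.sqrt (R / L) with hb
    set c := Real.sqrt (L / (N0 * R)) with hc
    have hc2 : c ^ 2 = L / (N0 * R) := Real.sq_sqrt (by positivity)
    have hb2 : b ^ 2 = R / L := Real.sq_sqrt (by positivity)
    have hb0 : 0 < b := Real.sqrt_pos.2 (by positivity)
    have hc1 : 1 ≤ c := by
      rw [hc]
      rw [show (1:ℝ) = Real.sqrt 1 by simp]
      apply Real.sqrt_le_sqrt
      rw [le_div_iff₀ (by positivity)]
      have := (le_div_iff₀ hN0).1 hR2
      nlinarith
    have hcle2 : c ≤ 2 := by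
      rw [hc, show (2:ℝ) = Real.sqrt 4 by
        rw [show (4:ℝ) = 2 ^ 2 by norm_num, Real.sqrt_sq (by norm_num)]]
      apply Real.sqrt_le_sqrt
      rw [div_le_iff₀ (by positivity)]
      have := (div_le_iff₀ (by positivity : (0:ℝ) < 4 * N0)).1 hR1
      linarith
    have hc0 : 0 < c := by linarith
    have hcb : c * b = a := by
      rw [hc, hb, ha, ← Real.sqrt_mul (by positivity) _]
      congr 1
      field_simp
    have hR' : R = b ^ 2 * L := by rw [hb2]; field_simp
    have hN0' : N0 = 1 / (c ^ 2 * b ^ 2) := by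
      rw [hc2, hb2]
      field_simp
    have hval : (fun ρ => ρ / ((ρ + 1) * N0) - ρ * R / L) (c - 1) = (a - b) ^ 2 := by
      dsimp only
      rw [← hcb, hN0']
      rw [hR']
      field_simp
      ring_nf
      rw [show c ^ 2 * c⁻¹ = c by field_simp, show c ^ 3 * c⁻¹ = c ^ 2 by field_simp]
      ring
    refine ⟨⟨⟨c - 1, Set.mem_Icc.2 ⟨by linarith, by linarith⟩, hval⟩, ?_⟩, hval⟩
    rintro x ⟨ρ, hρ, rfl⟩
    exact key_ub N0 R L ρ hN0 hL0 hR0 hρ.1
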